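/- For any simple graph G on vertex set {1,…,n}, the quantum intersection number of G — the least k ∈ ℕ for which there exist nonzero orthogonal projections P_1,…,P_n ∈ M_k (P_i = P_iᴴ = P_i², P_i ≠ 0) such that for all distinct i,j, P_iP_j ≠ 0 if and only if i and j are adjacent in G — is equal to γ(G), the least k ∈ ℕ for which there exist nonzero vectors x_1,…,x_n ∈ ℂ^k such that for all distinct i,j, ⟨x_j, x_i⟩ ≠ 0 if and only if i and j are adjacent in G. -/

import Mathlib

open Matrix
open scoped ComplexOrder

/-- Graph parameter `γ(G)`: the least `k` for which `G` is the non-orthogonality graph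
of a tuple of nonzero vectors in `ℂ^k`. -/
noncomputable def gammaG {n : ℕ} (G : SimpleGraph (Fin n)) : ℕ :=
  sInf {k | ∃ x : Fin n → Fin k → ℂ, (∀ i, x i ≠ 0) ∧
    ∀ i j, i ≠ j → (G.Adj i j ↔ ∑ r, star (x i r) * x j r ≠ 0)}

section aux

-- A finite family of proper subspaces of a ℂ-vector space can be avoided.
lemma exists_notMem_of_ne_top {V : Type*} [AddCommGroup V] [Module ℂ V]
    {ι : Type*} [Fintype ι] (p : ι → Submodule ℂ V) (hp : ∀ i, p i ≠ ⊤) :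
    ∃ u : V, ∀ i, u ∉ p i := by
  classical
  have h := Subspace.biUnion_ne_univ_of_top_notMem (k := ℂ) (E := V)
    (s := Finset.image p Finset.univ) (by
      intro ht
      obtain ⟨i, -, hi⟩ := Finset.mem_image.mp ht
      exact hp i hi)
  rw [Ne, Set.eq_univ_iff_forall] at h
  push_neg at h
  obtain ⟨u, hu⟩ := h
  refine ⟨u, fun i hi => hu ?_⟩
  simp only [Set.mem_iUnion]
  exact ⟨p i, Finset.mem_image_of_mem p (Finset.mem_univ i), hi⟩

lemma sum_star_eq_dot {k : ℕ} (a b : Fin k → ℂ) :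
    ∑ r, star (a r) * b r = star a ⬝ᵥ b := rfl

lemma star_dot_swap {k : ℕ} (a b : Fin k → ℂ) :
    star (star a ⬝ᵥ b) = star b ⬝ᵥ a := by
  rw [star_dotProduct, star_star]

-- swap lemma for products of Hermitian matrices
lemma herm_mul_eq_zero_comm {k : ℕ} {A B : Matrix (Fin k) (Fin k) ℂ}
    (hA : Aᴴ = A) (hB : Bᴴ = B) : A * B = 0 ↔ B * A = 0 := by
  constructor
  · intro h
    have := congrArg conjTranspose h
    rwa [conjTranspose_mul, hA, hB, conjTranspose_zero] at this
  · intro h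
    have := congrArg conjTranspose h
    rwa [conjTranspose_mul, hA, hB, conjTranspose_zero] at this

lemma ker_mulVecLin_ne_top {k : ℕ} {A : Matrix (Fin k) (Fin k) ℂ} (hA : A ≠ 0) :
    LinearMap.ker A.mulVecLin ≠ ⊤ := by
  intro h
  apply hA
  ext i j
  have : A *ᵥ Pi.single j 1 = 0 := by
    have : (Pi.single j 1 : Fin k → ℂ) ∈ LinearMap.ker A.mulVecLin := h ▸ Submodule.mem_top
    simpa [Matrix.mulVecLin_apply] using this
  have := congrFun this i
  simpa [Matrix.mulVec_single] using this

/-- Main induction: choose representative vectors in the ranges of the projections,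
generically, one at a time. -/
lemma exists_rep {n k : ℕ} (P : Fin n → Matrix (Fin k) (Fin k) ℂ)
    (hH : ∀ i, (P i)ᴴ = P i) (hI : ∀ i, P i * P i = P i) (hNZ : ∀ i, P i ≠ 0) (m : ℕ) :
    ∃ x : Fin n → Fin k → ℂ,
      (∀ i, P i *ᵥ x i = x i) ∧
      (∀ i : Fin n, (i : ℕ) < m → ∀ j, P j * P i ≠ 0 → P j *ᵥ x i ≠ 0) ∧
      (∀ i j : Fin n, (i : ℕ) < m → (j : ℕ) < m → i ≠ j → P i * P j ≠ 0 →
        star (x i) ⬝ᵥ x j ≠ 0) := by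
  induction m with
  | zero =>
    exact ⟨fun _ => 0, fun i => Matrix.mulVec_zero _, fun i hi => absurd hi (Nat.not_lt_zero _),
      fun i j hi => absurd hi (Nat.not_lt_zero _)⟩
  | succ m ih =>
    obtain ⟨x, h1, h2, h3⟩ := ih
    by_cases hm : m < n
    · set i₀ : Fin n := ⟨m, hm⟩ with hi₀
      -- k > 0
      have hk : k ≠ 0 := by
        intro hk0
        subst hk0
        exact hNZ i₀ (Subsingleton.elim _ _)
      haveI : Nonempty (Fin k) := ⟨⟨0, Nat.pos_of_ne_zero hk⟩⟩
      haveI : Nontrivial (Fin k → ℂ) := Function.nontrivial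
      -- linear functionals u ↦ ⟨x j, P i₀ u⟩
      set f : Fin n → ((Fin k → ℂ) →ₗ[ℂ] ℂ) := fun j =>
        { toFun := fun u => star (x j) ⬝ᵥ (P i₀ *ᵥ u)
          map_add' := fun u v => by simp [Matrix.mulVec_add, dotProduct_add]
          map_smul' := fun c u => by simp [Matrix.mulVec_smul, dotProduct_smul] } with hf
      have hfne : ∀ j, P i₀ *ᵥ x j ≠ 0 → f j ≠ 0 := by
        intro j hj h0
        apply hj
        have hval : f j (x j) = 0 := by rw [h0]; rfl
        have heq : star (P i₀ *ᵥ x j) ⬝ᵥ (P i₀ *ᵥ x j) = f j (x j) := by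
          show _ = star (x j) ⬝ᵥ (P i₀ *ᵥ x j)
          rw [star_mulVec, hH, ← dotProduct_mulVec, Matrix.mulVec_mulVec, hI]
        rw [← heq] at hval
        exact dotProduct_star_self_eq_zero.mp hval
      -- the proper subspaces to avoid
      classical
      obtain ⟨u, hu⟩ := exists_notMem_of_ne_top
        (ι := {j : Fin n // P j * P i₀ ≠ 0} ⊕ {j : Fin n // (j : ℕ) < m ∧ P i₀ *ᵥ x j ≠ 0})
        (Sum.elim (fun j => LinearMap.ker (P j.1 * P i₀).mulVecLin)
          (fun j => LinearMap.ker (f j.1)))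
        (by
          rintro (⟨j, hj⟩ | ⟨j, hj⟩)
          · exact ker_mulVecLin_ne_top hj
          · show LinearMap.ker (f j) ≠ ⊤
            rw [Ne, LinearMap.ker_eq_top]
            exact hfne j hj.2)
      have hu1 : ∀ j, P j * P i₀ ≠ 0 → (P j * P i₀) *ᵥ u ≠ 0 := by
        intro j hj h0
        apply hu (Sum.inl ⟨j, hj⟩)
        show u ∈ LinearMap.ker (P j * P i₀).mulVecLin
        rw [LinearMap.mem_ker, Matrix.mulVecLin_apply]
        exact h0
      have hu2 : ∀ j : Fin n, (j : ℕ) < m → P i₀ *ᵥ x j ≠ 0 →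
          star (x j) ⬝ᵥ (P i₀ *ᵥ u) ≠ 0 := by
        intro j hjm hj h0
        apply hu (Sum.inr ⟨j, hjm, hj⟩)
        show u ∈ LinearMap.ker (f j)
        rw [LinearMap.mem_ker]
        exact h0
      set x' : Fin n → Fin k → ℂ := Function.update x i₀ (P i₀ *ᵥ u) with hx'
      have hx'i₀ : x' i₀ = P i₀ *ᵥ u := Function.update_self _ _ _
      have hx'ne : ∀ i, i ≠ i₀ → x' i = x i := fun i hi => Function.update_of_ne hi _ _
      have hlt : ∀ i : Fin n, (i : ℕ) < m + 1 → i ≠ i₀ → (i : ℕ) < m := by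
        intro i hi hne
        rcases Nat.lt_succ_iff_lt_or_eq.mp hi with h | h
        · exact h
        · exact absurd (Fin.ext h) hne
      refine ⟨x', ?_, ?_, ?_⟩
      · intro i
        by_cases hi : i = i₀
        · subst hi
          rw [hx'i₀, Matrix.mulVec_mulVec, hI]
        · rw [hx'ne i hi]; exact h1 i
      · intro i hi j hj
        by_cases hii : i = i₀
        · subst hii
          rw [hx'i₀, Matrix.mulVec_mulVec]
          exact hu1 j hj
        · rw [hx'ne i hii]
          exact h2 i (hlt i hi hii) j hj
      · intro i j hi hj hij hPij
        by_cases hii : i = i₀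
        · subst hii
          have hjj : j ≠ i₀ := fun h => hij (h ▸ rfl)
          have hjm : (j : ℕ) < m := hlt j hj hjj
          rw [hx'ne j hjj, hx'i₀]
          -- need star (P i₀ *ᵥ u) ⬝ᵥ x j ≠ 0; we know star (x j) ⬝ᵥ (P i₀ *ᵥ u) ≠ 0
          have hPv : P i₀ *ᵥ x j ≠ 0 := h2 j hjm i₀ hPij
          have := hu2 j hjm hPv
          intro h0
          apply this
          have := star_dot_swap (P i₀ *ᵥ u) (x j)
          rw [h0, star_zero] at this
          exact this.symm
        · by_cases hjj : j = i₀
          · subst hjj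
            have him : (i : ℕ) < m := hlt i hi hii
            rw [hx'ne i hii, hx'i₀]
            have hPij' : P i₀ * P i ≠ 0 := by
              rw [Ne, herm_mul_eq_zero_comm (hH i₀) (hH i)]
              exact hPij
            have hPv : P i₀ *ᵥ x i ≠ 0 := h2 i him i₀ hPij'
            exact hu2 i him hPv
          · rw [hx'ne i hii, hx'ne j hjj]
            exact h3 i j (hlt i hi hii) (hlt j hj hjj) hij hPij
    · -- m ≥ n : nothing new to prove
      refine ⟨x, h1, ?_, ?_⟩
      · intro i hi
        exact h2 i (lt_of_lt_of_le i.isLt (Nat.le_of_not_lt hm))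
      · intro i j hi hj
        exact h3 i j (lt_of_lt_of_le i.isLt (Nat.le_of_not_lt hm))
          (lt_of_lt_of_le j.isLt (Nat.le_of_not_lt hm))

lemma proj_to_vec {n k : ℕ} {G : SimpleGraph (Fin n)}
    (P : Fin n → Matrix (Fin k) (Fin k) ℂ)
    (hH : ∀ i, (P i)ᴴ = P i) (hI : ∀ i, P i * P i = P i) (hNZ : ∀ i, P i ≠ 0)
    (hadj : ∀ i j, i ≠ j → (G.Adj i j ↔ P i * P j ≠ 0)) :
    ∃ x : Fin n → Fin k → ℂ, (∀ i, x i ≠ 0) ∧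
      ∀ i j, i ≠ j → (G.Adj i j ↔ ∑ r, star (x i r) * x j r ≠ 0) := by
  obtain ⟨x, h1, h2, h3⟩ := exists_rep P hH hI hNZ n
  have hxne : ∀ i, x i ≠ 0 := by
    intro i
    have := h2 i i.isLt i (by rw [hI i]; exact hNZ i)
    rwa [h1 i] at this
  refine ⟨x, hxne, fun i j hij => (hadj i j hij).trans ?_⟩
  rw [sum_star_eq_dot]
  constructor
  · intro h
    exact h3 i j i.isLt j.isLt hij h
  · intro h h0
    apply h
    rw [← h1 i, ← h1 j, star_mulVec, hH, ← dotProduct_mulVec, Matrix.mulVec_mulVec, h0,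
      Matrix.zero_mulVec, dotProduct_zero]

lemma vec_to_proj {n k : ℕ} {G : SimpleGraph (Fin n)}
    (x : Fin n → Fin k → ℂ) (hx : ∀ i, x i ≠ 0)
    (hadj : ∀ i j, i ≠ j → (G.Adj i j ↔ ∑ r, star (x i r) * x j r ≠ 0)) :
    ∃ P : Fin n → Matrix (Fin k) (Fin k) ℂ,
      (∀ i, (P i)ᴴ = P i) ∧ (∀ i, P i * P i = P i) ∧ (∀ i, P i ≠ 0) ∧
      ∀ i j, i ≠ j → (G.Adj i j ↔ P i * P j ≠ 0) := by
  set c : Fin n → ℂ := fun i => star (x i) ⬝ᵥ x i with hc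
  have hcne : ∀ i, c i ≠ 0 := fun i h => hx i (dotProduct_star_self_eq_zero.mp h)
  have hcstar : ∀ i, star (c i) = c i := fun i => star_dot_swap (x i) (x i)
  set P : Fin n → Matrix (Fin k) (Fin k) ℂ :=
    fun i => (c i)⁻¹ • Matrix.vecMulVec (x i) (star (x i)) with hP
  have hPapp : ∀ i a b, P i a b = (c i)⁻¹ * (x i a * star (x i b)) := by
    intro i a b
    show ((c i)⁻¹ • Matrix.vecMulVec (x i) (star (x i))) a b = _
    rw [Matrix.smul_apply, Matrix.vecMulVec_apply, smul_eq_mul, Pi.star_apply]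
  have hmul : ∀ i j a b, (P i * P j) a b =
      (star (x i) ⬝ᵥ x j) * ((c i)⁻¹ * (c j)⁻¹ * (x i a * star (x j b))) := by
    intro i j a b
    rw [Matrix.mul_apply]
    simp only [hPapp]
    rw [show (star (x i) ⬝ᵥ x j) = ∑ t, star (x i t) * x j t from rfl, Finset.sum_mul]
    refine Finset.sum_congr rfl fun t _ => ?_
    ring
  have hHerm : ∀ i, (P i)ᴴ = P i := by
    intro i
    ext a b
    rw [Matrix.conjTranspose_apply, hPapp, hPapp, star_mul', star_mul', star_star,
      star_inv₀, hcstar i]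
    ring
  have hIdem : ∀ i, P i * P i = P i := by
    intro i
    ext a b
    rw [hmul, hPapp]
    have hci : star (x i) ⬝ᵥ x i = c i := rfl
    rw [hci, show c i * ((c i)⁻¹ * (c i)⁻¹ * (x i a * star (x i b))) =
      c i * (c i)⁻¹ * ((c i)⁻¹ * (x i a * star (x i b))) from by ring,
      mul_inv_cancel₀ (hcne i), one_mul]
  refine ⟨P, hHerm, hIdem, ?_, ?_⟩
  · intro i h0
    obtain ⟨a, ha⟩ := Function.ne_iff.mp (hx i)
    have : P i a a = 0 := by rw [h0]; rfl
    rw [hPapp] at this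
    exact (mul_ne_zero (inv_ne_zero (hcne i)) (mul_ne_zero ha (star_ne_zero.mpr ha))) this
  · intro i j hij
    rw [hadj i j hij, sum_star_eq_dot]
    constructor
    · intro hdot h0
      obtain ⟨a, ha⟩ := Function.ne_iff.mp (hx i)
      obtain ⟨b, hb⟩ := Function.ne_iff.mp (hx j)
      have : (P i * P j) a b = 0 := by rw [h0]; rfl
      rw [hmul] at this
      rcases mul_eq_zero.mp this with h | h
      · exact hdot h
      · rcases mul_eq_zero.mp h with h | h
        · rcases mul_eq_zero.mp h with h | h
          · exact inv_ne_zero (hcne i) h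
          · exact inv_ne_zero (hcne j) h
        · rcases mul_eq_zero.mp h with h | h
          · exact ha h
          · exact star_ne_zero.mpr hb h
    · intro h hdot
      apply h
      ext a b
      rw [hmul, hdot, zero_mul]
      rfl

end aux

/-- the quantum intersection number of `G` (least `k` admitting nonzero
projections in `M_k` with non-orthogonality graph `G`) equals `γ(G)`. -/
theorem qinter_eq_gamma (n : ℕ) (G : SimpleGraph (Fin n)) :
    sInf {k : ℕ | ∃ P : Fin n → Matrix (Fin k) (Fin k) ℂ,
      (∀ i, (P i)ᴴ = P i) ∧ (∀ i, P i * P i = P i) ∧ (∀ i, P i ≠ 0) ∧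
      ∀ i j, i ≠ j → (G.Adj i j ↔ P i * P j ≠ 0)} = gammaG G := by
  rw [gammaG]
  congr 1
  ext k
  simp only [Set.mem_setOf_eq]
  constructor
  · rintro ⟨P, hH, hI, hNZ, hadj⟩
    exact proj_to_vec P hH hI hNZ hadj
  · rintro ⟨x, hx, hadj⟩
    exact vec_to_proj x hx hadj
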